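/- Let Δ₃ be the simplicial complex on vertices {w_{i,j} : 1 ≤ i ≤ m, 1 ≤ j ≤ n} (m ≤ n, m ≥ 3) whose faces are sets containing no triple w_{i,r}, w_{j,q}, w_{k,p} with i < j < k and p < q < r. Then every facet of Δ₃ is a union of two disjoint monotone lattice paths, from (1,1) to (m,n) and from (2,1) to (m,n-1), and conversely every such union of disjoint paths is a facet. In particular Δ₃ is pure of dimension 2m+2n-5. -/

import Mathlib

/-- A single step in a monotone lattice path: one unit down or one unit right. -/
def IsStep (p q : ℕ × ℕ) : Prop := q = (p.1 + 1, p.2) ∨ q = (p.1, p.2 + 1)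

/-- `L` is a monotone lattice path from `(a,b)` to `(c,d)`. -/
def IsPath (a b c d : ℕ) (L : List (ℕ × ℕ)) : Prop :=
  L ≠ [] ∧ L.head? = some (a, b) ∧ L.getLast? = some (c, d) ∧ L.Chain' IsStep

/-- A face of `Δ₃`: a set of grid positions with no strictly decreasing antidiagonal triple. -/
def IsFace3 (m n : ℕ) (F : Finset (ℕ × ℕ)) : Prop :=
  (∀ v ∈ F, 1 ≤ v.1 ∧ v.1 ≤ m ∧ 1 ≤ v.2 ∧ v.2 ≤ n) ∧
  ∀ i j k p q r : ℕ, i < j → j < k → p < q → q < r →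
    ¬((i, r) ∈ F ∧ (j, q) ∈ F ∧ (k, p) ∈ F)

def IsFacet3 (m n : ℕ) (F : Finset (ℕ × ℕ)) : Prop :=
  IsFace3 m n F ∧ ∀ G : Finset (ℕ × ℕ), IsFace3 m n G → F ⊆ G → F = G

set_option linter.unusedSectionVars false
set_option linter.unusedVariables false

namespace Delta3


lemma path_get_zero {a b c d : ℕ} {L : List (ℕ × ℕ)} (h : IsPath a b c d L)
    (h0 : 0 < L.length) : L.get ⟨0, h0⟩ = (a, b) := by
  obtain ⟨hne, hh, -, -⟩ := h
  cases L with
  | nil => simp at hne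
  | cons x t => simpa using hh

lemma path_get_last {a b c d : ℕ} {L : List (ℕ × ℕ)} (h : IsPath a b c d L)
    (h0 : L.length - 1 < L.length) : L.get ⟨L.length - 1, h0⟩ = (c, d) := by
  obtain ⟨hne, -, hl, -⟩ := h
  rw [List.getLast?_eq_getLast_of_ne_nil hne] at hl
  rw [List.get_eq_getElem, ← List.getLast_eq_getElem hne]
  exact Option.some.inj hl

lemma path_sum {a b c d : ℕ} {L : List (ℕ × ℕ)} (h : IsPath a b c d L) :
    ∀ i (hi : i < L.length), (L.get ⟨i, hi⟩).1 + (L.get ⟨i, hi⟩).2 = a + b + i := by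
  intro i
  induction i with
  | zero => intro hi; rw [path_get_zero h]; simp
  | succ k ih =>
    intro hi
    have hk : k < L.length - 1 := by omega
    have hstep := List.isChain_iff_getElem.mp h.2.2.2 k (by omega)
    have := ih (by omega)
    rcases hstep with h1 | h1 <;>
      · have h1' := congrArg Prod.fst h1
        have h2' := congrArg Prod.snd h1
        simp only [List.get_eq_getElem] at h1' h2' this ⊢
        omega

lemma path_mono {a b c d : ℕ} {L : List (ℕ × ℕ)} (h : IsPath a b c d L) :
    ∀ i j (hi : i < L.length) (hj : j < L.length), i ≤ j →
      (L.get ⟨i, hi⟩).1 ≤ (L.get ⟨j, hj⟩).1 ∧ (L.get ⟨i, hi⟩).2 ≤ (L.get ⟨j, hj⟩).2 := by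
  intro i j hi hj hij
  induction j with
  | zero => interval_cases i; exact ⟨le_rfl, le_rfl⟩
  | succ k ih =>
    rcases Nat.lt_or_ge i (k+1) with hlt | hge
    · have hk : k < L.length - 1 := by omega
      have hstep := List.isChain_iff_getElem.mp h.2.2.2 k (by omega)
      have hik := ih (by omega) (by omega)
      rcases hstep with h1 | h1 <;>
        · have h1' := congrArg Prod.fst h1
          have h2' := congrArg Prod.snd h1
          simp only [List.get_eq_getElem] at h1' h2' hik ⊢
          omega
    · have : i = k + 1 := by omega
      subst this; exact ⟨le_rfl, le_rfl⟩

lemma path_length {a b c d : ℕ} {L : List (ℕ × ℕ)} (h : IsPath a b c d L) :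
    a + b ≤ c + d ∧ L.length = c + d - (a + b) + 1 := by
  have hne := h.1
  have h0 : 0 < L.length := List.length_pos_iff.mpr hne
  have hl := path_get_last h (by omega)
  have := path_sum h (L.length - 1) (by omega)
  rw [hl] at this
  simp at this
  omega

lemma path_mem_iff {a b c d : ℕ} {L : List (ℕ × ℕ)} (h : IsPath a b c d L) {u : ℕ × ℕ} :
    u ∈ L ↔ ∃ (i : ℕ) (hi : i < L.length), L.get ⟨i, hi⟩ = u := by
  constructor
  · intro hu; obtain ⟨⟨i, hi⟩, hg⟩ := List.mem_iff_get.mp hu; exact ⟨i, hi, hg⟩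
  · rintro ⟨i, hi, rfl⟩; exact List.get_mem _ _

lemma path_bounds {a b c d : ℕ} {L : List (ℕ × ℕ)} (h : IsPath a b c d L) :
    ∀ u ∈ L, a ≤ u.1 ∧ u.1 ≤ c ∧ b ≤ u.2 ∧ u.2 ≤ d ∧ a + b ≤ u.1 + u.2 ∧ u.1 + u.2 ≤ c + d := by
  intro u hu
  obtain ⟨i, hi, rfl⟩ := (path_mem_iff h).mp hu
  have h0 : 0 < L.length := List.length_pos_iff.mpr h.1
  have hm1 := path_mono h 0 i h0 hi (by omega)
  have hm2 := path_mono h i (L.length - 1) hi (by omega) (by omega)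
  rw [path_get_zero h] at hm1
  rw [path_get_last h] at hm2
  have := path_sum h i hi
  simp only [List.get_eq_getElem] at hm1 hm2 this ⊢
  omega

lemma path_comparable {a b c d : ℕ} {L : List (ℕ × ℕ)} (h : IsPath a b c d L) :
    ∀ u ∈ L, ∀ v ∈ L, (u.1 ≤ v.1 ∧ u.2 ≤ v.2) ∨ (v.1 ≤ u.1 ∧ v.2 ≤ u.2) := by
  intro u hu v hv
  obtain ⟨i, hi, rfl⟩ := (path_mem_iff h).mp hu
  obtain ⟨j, hj, rfl⟩ := (path_mem_iff h).mp hv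
  rcases Nat.le_or_le i j with hij | hij
  · exact Or.inl (path_mono h i j hi hj hij)
  · exact Or.inr (path_mono h j i hj hi hij)

lemma path_nodup {a b c d : ℕ} {L : List (ℕ × ℕ)} (h : IsPath a b c d L) : L.Nodup := by
  rw [List.nodup_iff_injective_get]
  rintro ⟨i, hi⟩ ⟨j, hj⟩ hg
  have h1 := path_sum h i hi
  have h2 := path_sum h j hj
  rw [hg] at h1
  have : i = j := by omega
  simp [this]

lemma path_diag {a b c d : ℕ} {L : List (ℕ × ℕ)} (h : IsPath a b c d L) :
    ∀ s, a + b ≤ s → s ≤ c + d → ∃ u ∈ L, u.1 + u.2 = s := by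
  intro s h1 h2
  have hlen := path_length h
  have hi : s - (a+b) < L.length := by omega
  refine ⟨L.get ⟨s - (a+b), hi⟩, List.get_mem _ _, ?_⟩
  have := path_sum h (s - (a+b)) hi
  omega

lemma path_head_mem {a b c d : ℕ} {L : List (ℕ × ℕ)} (h : IsPath a b c d L) : (a, b) ∈ L := by
  have h0 : 0 < L.length := List.length_pos_iff.mpr h.1
  rw [← path_get_zero h h0]; exact List.get_mem _ _

lemma path_last_mem {a b c d : ℕ} {L : List (ℕ × ℕ)} (h : IsPath a b c d L) : (c, d) ∈ L := by
  have h0 : 0 < L.length := List.length_pos_iff.mpr h.1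
  rw [← path_get_last h (by omega)]; exact List.get_mem _ _


/-- two points of a path cannot strictly cross -/
lemma path_nocross {a b c d : ℕ} {L : List (ℕ × ℕ)} (h : IsPath a b c d L)
    {u v : ℕ × ℕ} (hu : u ∈ L) (hv : v ∈ L) (h1 : u.1 < v.1) (h2 : v.2 < u.2) : False := by
  rcases path_comparable h u hu v hv with ⟨hc, hd⟩ | ⟨hc, hd⟩ <;> omega

lemma face_of_paths {m n : ℕ} (hm : 3 ≤ m) (hmn : m ≤ n) {P Q : List (ℕ × ℕ)}
    (hP : IsPath 1 1 m n P) (hQ : IsPath 2 1 m (n - 1) Q) :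
    IsFace3 m n (P.toFinset ∪ Q.toFinset) := by
  constructor
  · intro v hv
    rcases Finset.mem_union.mp hv with hv | hv
    · have := path_bounds hP v (List.mem_toFinset.mp hv); omega
    · have := path_bounds hQ v (List.mem_toFinset.mp hv); omega
  · intro i j k p q r hij hjk hpq hqr ⟨h1, h2, h3⟩
    have m1 := Finset.mem_union.mp h1
    have m2 := Finset.mem_union.mp h2
    have m3 := Finset.mem_union.mp h3
    simp only [List.mem_toFinset] at m1 m2 m3
    -- two of the three points lie on the same path
    rcases m1 with m1 | m1 <;> rcases m2 with m2 | m2 <;> rcases m3 with m3 | m3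
    · exact path_nocross hP m1 m2 (show i < j by omega) (show q < r by omega)
    · exact path_nocross hP m1 m2 (show i < j by omega) (show q < r by omega)
    · exact path_nocross hP m1 m3 (show i < k by omega) (show p < r by omega)
    · exact path_nocross hQ m2 m3 (show j < k by omega) (show p < q by omega)
    · exact path_nocross hP m2 m3 (show j < k by omega) (show p < q by omega)
    · exact path_nocross hQ m1 m3 (show i < k by omega) (show p < r by omega)
    · exact path_nocross hQ m1 m2 (show i < j by omega) (show q < r by omega)
    · exact path_nocross hQ m1 m2 (show i < j by omega) (show q < r by omega)

/-- three distinct points with the same coordinate sum in a face give a contradiction -/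
lemma no_three_on_diag {m n : ℕ} {G : Finset (ℕ × ℕ)} (hG : IsFace3 m n G)
    {u v w : ℕ × ℕ} (hu : u ∈ G) (hv : v ∈ G) (hw : w ∈ G)
    (huv : u ≠ v) (huw : u ≠ w) (hvw : v ≠ w)
    (h1 : u.1 + u.2 = v.1 + v.2) (h2 : v.1 + v.2 = w.1 + w.2) : False := by
  have key : ∀ x y z : ℕ × ℕ, x ∈ G → y ∈ G → z ∈ G → x.1 < y.1 → y.1 < z.1 →
      x.1 + x.2 = y.1 + y.2 → y.1 + y.2 = z.1 + z.2 → False := by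
    intro x y z hx hy hz hxy hyz e1 e2
    exact hG.2 x.1 y.1 z.1 z.2 y.2 x.2 hxy hyz (by omega) (by omega) ⟨by simpa using hx, by simpa using hy, by simpa using hz⟩
  have d1 : u.1 ≠ v.1 := fun h => huv (Prod.ext h (by omega))
  have d2 : u.1 ≠ w.1 := fun h => huw (Prod.ext h (by omega))
  have d3 : v.1 ≠ w.1 := fun h => hvw (Prod.ext h (by omega))
  rcases Nat.lt_or_ge u.1 v.1 with c1 | c1 <;> rcases Nat.lt_or_ge v.1 w.1 with c2 | c2 <;>
    rcases Nat.lt_or_ge u.1 w.1 with c3 | c3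
  · exact key u v w hu hv hw c1 c2 (by omega) (by omega)
  · exact key u v w hu hv hw c1 c2 (by omega) (by omega)
  · exact key u w v hu hw hv (by omega) (by omega) (by omega) (by omega)
  · exact key w u v hw hu hv (by omega) (by omega) (by omega) (by omega)
  · exact key v u w hv hu hw (by omega) (by omega) (by omega) (by omega)
  · exact key v w u hv hw hu (by omega) (by omega) (by omega) (by omega)
  · exact key v u w hv hu hw (by omega) (by omega) (by omega) (by omega)
  · exact key w v u hw hv hu (by omega) (by omega) (by omega) (by omega)

lemma facet_of_paths {m n : ℕ} (hm : 3 ≤ m) (hmn : m ≤ n) {P Q : List (ℕ × ℕ)}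
    (hP : IsPath 1 1 m n P) (hQ : IsPath 2 1 m (n - 1) Q)
    (hd : ∀ v ∈ P, v ∉ Q) :
    IsFace3 m n (P.toFinset ∪ Q.toFinset) ∧
      ∀ G : Finset (ℕ × ℕ), IsFace3 m n G → (P.toFinset ∪ Q.toFinset) ⊆ G →
        (P.toFinset ∪ Q.toFinset) = G := by
  have hface := face_of_paths hm hmn hP hQ
  refine ⟨hface, fun G hG hFG => Finset.Subset.antisymm hFG fun v hv => ?_⟩
  by_contra hvF
  have hb := hG.1 v hv
  set s := v.1 + v.2 with hs
  have hs2 : 2 ≤ s := by omega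
  have hsmn : s ≤ m + n := by omega
  rcases eq_or_lt_of_le hs2 with h2 | h2
  · have : v = (1, 1) := Prod.ext (by omega) (by omega)
    exact hvF (Finset.mem_union_left _ (List.mem_toFinset.mpr (this ▸ path_head_mem hP)))
  rcases eq_or_lt_of_le hsmn with hmn' | hmn'
  · have : v = (m, n) := Prod.ext (by omega) (by omega)
    exact hvF (Finset.mem_union_left _ (List.mem_toFinset.mpr (this ▸ path_last_mem hP)))
  · obtain ⟨p, hpP, hps⟩ := path_diag hP s (by omega) (by omega)
    obtain ⟨q, hqQ, hqs⟩ := path_diag hQ s (by omega) (by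
      have : (2 : ℕ) ≤ n := by omega
      omega)
    have hpF : p ∈ P.toFinset ∪ Q.toFinset := Finset.mem_union_left _ (List.mem_toFinset.mpr hpP)
    have hqF : q ∈ P.toFinset ∪ Q.toFinset := Finset.mem_union_right _ (List.mem_toFinset.mpr hqQ)
    have hpv : p ≠ v := fun h => hvF (h ▸ hpF)
    have hqv : q ≠ v := fun h => hvF (h ▸ hqF)
    have hpq : p ≠ q := fun h => hd p hpP (h ▸ hqQ)
    exact no_three_on_diag hG (hFG hpF) (hFG hqF) hv hpq hpv hqv (by omega) (by omega)

lemma card_of_paths {m n : ℕ} (hm : 3 ≤ m) (hmn : m ≤ n) {P Q : List (ℕ × ℕ)}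
    (hP : IsPath 1 1 m n P) (hQ : IsPath 2 1 m (n - 1) Q)
    (hd : ∀ v ∈ P, v ∉ Q) :
    (P.toFinset ∪ Q.toFinset).card = 2 * m + 2 * n - 4 := by
  have hdisj : Disjoint P.toFinset Q.toFinset := by
    rw [Finset.disjoint_left]
    intro a haP haQ
    exact hd a (List.mem_toFinset.mp haP) (List.mem_toFinset.mp haQ)
  rw [Finset.card_union_of_disjoint hdisj,
    List.toFinset_card_of_nodup (path_nodup hP), List.toFinset_card_of_nodup (path_nodup hQ),
    (path_length hP).2, (path_length hQ).2]
  have h1 := (path_length hQ).1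
  omega



/-- the splitting condition: `u` belongs to the lower chain -/
def cond2 (m n : ℕ) (F : Finset (ℕ × ℕ)) (u : ℕ × ℕ) : Prop :=
  (∃ w ∈ F, w.1 < u.1 ∧ u.2 < w.2) ∨ (u ≠ (1, 1) ∧ u ≠ (m, n) ∧ (u.1 = m ∨ u.2 = 1))

open Classical in
noncomputable def S1 (m n : ℕ) (F : Finset (ℕ × ℕ)) : Finset (ℕ × ℕ) :=
  insert (1, 1) (insert (m, n) (F.filter fun u => ¬ cond2 m n F u))

open Classical in
noncomputable def S2 (m n : ℕ) (F : Finset (ℕ × ℕ)) : Finset (ℕ × ℕ) :=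
  insert (2, 1) (insert (m, n - 1) (F.filter (cond2 m n F)))

lemma S2_nonempty (m n : ℕ) (F : Finset (ℕ × ℕ)) : (S2 m n F).Nonempty :=
  ⟨(2, 1), by simp [S2]⟩

noncomputable def xf (m n : ℕ) (F : Finset (ℕ × ℕ)) (s : ℕ) : ℕ :=
  max (max 1 (s - n)) ((S1 m n F).sup fun c => if c.1 + c.2 ≤ s then c.1 else s - c.2)

noncomputable def yf (m n : ℕ) (F : Finset (ℕ × ℕ)) (s : ℕ) : ℕ :=
  min (min m (s - 1)) ((S2 m n F).inf' (S2_nonempty m n F) fun c => if s ≤ c.1 + c.2 then c.1 else s - c.2)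

lemma mem_S1 {m n : ℕ} {F : Finset (ℕ × ℕ)} {u : ℕ × ℕ} :
    u ∈ S1 m n F ↔ u = (1, 1) ∨ u = (m, n) ∨ (u ∈ F ∧ ¬ cond2 m n F u) := by
  simp [S1, Finset.mem_insert, Finset.mem_filter, and_comm]

lemma mem_S2 {m n : ℕ} {F : Finset (ℕ × ℕ)} {u : ℕ × ℕ} :
    u ∈ S2 m n F ↔ u = (2, 1) ∨ u = (m, n - 1) ∨ (u ∈ F ∧ cond2 m n F u) := by
  simp [S2, Finset.mem_insert, Finset.mem_filter, and_comm]

section Main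

variable {m n : ℕ} {F : Finset (ℕ × ℕ)} (hm : 3 ≤ m) (hmn : m ≤ n) (hF : IsFace3 m n F)

include hm hmn hF

lemma b1 : ∀ c ∈ S1 m n F, 1 ≤ c.1 ∧ c.1 ≤ m ∧ 1 ≤ c.2 ∧ c.2 ≤ n := by
  intro c hc
  rcases mem_S1.mp hc with rfl | rfl | ⟨hcF, -⟩
  · simp; omega
  · simp; omega
  · exact hF.1 c hcF

lemma b2 : ∀ c ∈ S2 m n F, 2 ≤ c.1 ∧ c.1 ≤ m ∧ 1 ≤ c.2 ∧ c.2 ≤ n - 1 := by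
  intro c hc
  rcases mem_S2.mp hc with rfl | rfl | ⟨hcF, hc2⟩
  · simp; omega
  · simp; omega
  · have hb := hF.1 c hcF
    rcases hc2 with ⟨w, hwF, hw1, hw2⟩ | ⟨h11, hmn', h1⟩
    · have hwb := hF.1 w hwF
      omega
    · have e1 : ¬ (c.1 = 1 ∧ c.2 = 1) := fun h => h11 (Prod.ext h.1 h.2)
      have e2 : ¬ (c.1 = m ∧ c.2 = n) := fun h => hmn' (Prod.ext h.1 h.2)
      omega

lemma b1a : ∀ c ∈ S1 m n F, c.2 = 1 → c.1 = 1 := by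
  intro c hc h1
  rcases mem_S1.mp hc with rfl | rfl | ⟨hcF, hnc⟩
  · rfl
  · simp at h1 ⊢; omega
  · have hb := hF.1 c hcF
    by_contra hne
    exact hnc (Or.inr ⟨fun h => hne (by rw [h]), fun h => (by rw [h] at h1; simp at h1; omega),
      Or.inr h1⟩)

lemma b1b : ∀ c ∈ S1 m n F, c.1 = m → c.2 = n := by
  intro c hc h1
  rcases mem_S1.mp hc with rfl | rfl | ⟨hcF, hnc⟩
  · simp at h1 ⊢; omega
  · rfl
  · have hb := hF.1 c hcF
    by_contra hne
    exact hnc (Or.inr ⟨fun h => (by rw [h] at h1; simp at h1; omega),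
      fun h => hne (by rw [h]), Or.inl h1⟩)

lemma nocross1 : ∀ a ∈ S1 m n F, ∀ b ∈ S1 m n F, a.1 < b.1 → b.2 < a.2 → False := by
  intro a ha b hb h1 h2
  have hab := b1 hm hmn hF a ha
  have hbb := b1 hm hmn hF b hb
  rcases mem_S1.mp ha with rfl | rfl | ⟨haF, hnca⟩
  · simp at h2; omega
  · simp at h1; omega
  · rcases mem_S1.mp hb with rfl | rfl | ⟨hbF, hncb⟩
    · simp at h1; omega
    · simp at h2; omega
    · exact hncb (Or.inl ⟨a, haF, h1, h2⟩)

lemma nocross2 : ∀ a ∈ S2 m n F, ∀ b ∈ S2 m n F, a.1 < b.1 → b.2 < a.2 → False := by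
  intro a ha b hb h1 h2
  have hab := b2 hm hmn hF a ha
  have hbb := b2 hm hmn hF b hb
  rcases mem_S2.mp ha with rfl | rfl | ⟨haF, hca⟩
  · simp at h2; omega
  · simp at h1; omega
  · rcases mem_S2.mp hb with rfl | rfl | ⟨hbF, hcb⟩
    · simp at h1 h2; omega
    · simp at h1 h2; omega
    · rcases hca with ⟨w, hwF, hw1, hw2⟩ | ⟨h11, hmn', hbd⟩
      · refine hF.2 w.1 a.1 b.1 b.2 a.2 w.2 hw1 h1 h2 hw2 ⟨by simpa using hwF, by simpa using haF, by simpa using hbF⟩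
      · have hbbF := hF.1 b hbF
        omega

omit hm hmn hF in
lemma chain_of_nocross {S : Finset (ℕ × ℕ)}
    (h : ∀ a ∈ S, ∀ b ∈ S, a.1 < b.1 → b.2 < a.2 → False) :
    ∀ a ∈ S, ∀ b ∈ S, (a.1 ≤ b.1 ∧ a.2 ≤ b.2) ∨ (b.1 ≤ a.1 ∧ b.2 ≤ a.2) := by
  intro a ha b hb
  rcases Nat.lt_trichotomy a.1 b.1 with hlt | heq | hgt
  · have : ¬ (b.2 < a.2) := fun hc => h a ha b hb hlt hc
    left; omega
  · rcases Nat.le_total a.2 b.2 with h' | h'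
    · left; omega
    · right; omega
  · have : ¬ (a.2 < b.2) := fun hc => h b hb a ha hgt hc
    right; omega

lemma chain1 : ∀ a ∈ S1 m n F, ∀ b ∈ S1 m n F,
    (a.1 ≤ b.1 ∧ a.2 ≤ b.2) ∨ (b.1 ≤ a.1 ∧ b.2 ≤ a.2) :=
  chain_of_nocross (nocross1 hm hmn hF)

lemma chain2 : ∀ a ∈ S2 m n F, ∀ b ∈ S2 m n F,
    (a.1 ≤ b.1 ∧ a.2 ≤ b.2) ∨ (b.1 ≤ a.1 ∧ b.2 ≤ a.2) :=
  chain_of_nocross (nocross2 hm hmn hF)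

/-- the key separation fact -/
lemma sep_key : ∀ a ∈ S1 m n F, ∀ b ∈ S2 m n F, b.1 ≤ a.1 → a.2 ≤ b.2 → False := by
  intro a ha b hb hba hab
  have habb := b2 hm hmn hF b hb
  rcases mem_S1.mp ha with rfl | rfl | ⟨haF, hnca⟩
  · simp at hba hab; omega
  · simp at hba hab; omega
  · have haFb := hF.1 a haF
    -- numeric consequences of ¬ cond2 a
    have hA : (a.1 ≠ m ∧ a.2 ≠ 1) ∨ (a.1 = 1 ∧ a.2 = 1) ∨ (a.1 = m ∧ a.2 = n) := by
      by_cases h1 : a = (1, 1)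
      · right; left; rw [h1]; exact ⟨rfl, rfl⟩
      · by_cases h2 : a = (m, n)
        · right; right; rw [h2]; exact ⟨rfl, rfl⟩
        · left
          constructor
          · intro hc; exact hnca (Or.inr ⟨h1, h2, Or.inl hc⟩)
          · intro hc; exact hnca (Or.inr ⟨h1, h2, Or.inr hc⟩)
    rcases mem_S2.mp hb with rfl | rfl | ⟨hbF, hcb⟩
    · simp at hba hab; rcases hA with h | h | h <;> omega
    · simp at hba hab; rcases hA with h | h | h <;> omega
    · rcases hcb with ⟨w, hwF, hw1, hw2⟩ | ⟨h11, hmn', hbd⟩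
      · exact hnca (Or.inl ⟨w, hwF, by omega, by omega⟩)
      · have e1 : ¬ (b.1 = 1 ∧ b.2 = 1) := fun h => h11 (Prod.ext h.1 h.2)
        have e2 : ¬ (b.1 = m ∧ b.2 = n) := fun h => hmn' (Prod.ext h.1 h.2)
        have hbFb := hF.1 b hbF
        rcases hA with h | h | h <;> omega

lemma sep : ∀ a ∈ S1 m n F, ∀ b ∈ S2 m n F,
    (a.1 + a.2 ≤ b.1 + b.2 → a.1 < b.1) ∧ (b.1 + b.2 ≤ a.1 + a.2 → b.2 < a.2) := by
  intro a ha b hb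
  have key := sep_key hm hmn hF a ha b hb
  constructor
  · intro hsum
    by_contra hc
    exact key (by omega) (by omega)
  · intro hsum
    by_contra hc
    exact key (by omega) (by omega)


lemma xf_bounds {s : ℕ} (hs2 : 2 ≤ s) (hsmn : s ≤ m + n) :
    max 1 (s - n) ≤ xf m n F s ∧ xf m n F s ≤ m ∧ xf m n F s ≤ s - 1 := by
  refine ⟨le_max_left _ _, ?_, ?_⟩
  · apply max_le (by omega)
    apply Finset.sup_le
    intro c hc
    have hb := b1 hm hmn hF c hc
    split_ifs <;> omega
  · apply max_le (by omega)
    apply Finset.sup_le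
    intro c hc
    have hb := b1 hm hmn hF c hc
    split_ifs <;> omega

lemma xf_two : xf m n F 2 = 1 := by
  have h := xf_bounds hm hmn hF (le_refl 2) (by omega)
  omega

lemma xf_last : xf m n F (m + n) = m := by
  have h := xf_bounds hm hmn hF (s := m + n) (by omega) (by omega)
  have hmem : ((m, n) : ℕ × ℕ) ∈ S1 m n F := mem_S1.mpr (Or.inr (Or.inl rfl))
  have h2 := Finset.le_sup (f := fun c : ℕ × ℕ => if c.1 + c.2 ≤ m + n then c.1 else m + n - c.2) hmem
  simp only [if_pos (le_refl (m + n))] at h2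
  have h3 : (S1 m n F).sup (fun c : ℕ × ℕ => if c.1 + c.2 ≤ m + n then c.1 else m + n - c.2) ≤ xf m n F (m + n) :=
    le_max_right _ _
  omega

lemma xf_step {s : ℕ} (hs2 : 2 ≤ s) (hsmn : s ≤ m + n) :
    xf m n F s ≤ xf m n F (s + 1) ∧ xf m n F (s + 1) ≤ xf m n F s + 1 := by
  have hlb : max 1 (s - n) ≤ xf m n F s := le_max_left _ _
  have hlb' : max 1 (s + 1 - n) ≤ xf m n F (s + 1) := le_max_left _ _
  constructor
  · apply max_le (by omega)
    apply Finset.sup_le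
    intro c hc
    have hb := b1 hm hmn hF c hc
    have h2 : (if c.1 + c.2 ≤ s + 1 then c.1 else s + 1 - c.2) ≤ xf m n F (s + 1) :=
      le_trans (Finset.le_sup (f := fun c : ℕ × ℕ => if c.1 + c.2 ≤ s + 1 then c.1 else s + 1 - c.2) hc) (le_max_right _ _)
    split_ifs at h2 ⊢ <;> omega
  · apply max_le (by omega)
    apply Finset.sup_le
    intro c hc
    have hb := b1 hm hmn hF c hc
    have h1 : (if c.1 + c.2 ≤ s then c.1 else s - c.2) ≤ xf m n F s :=
      le_trans (Finset.le_sup (f := fun c : ℕ × ℕ => if c.1 + c.2 ≤ s then c.1 else s - c.2) hc) (le_max_right _ _)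
    split_ifs at h1 ⊢ <;> omega

lemma xf_mem : ∀ c ∈ S1 m n F, xf m n F (c.1 + c.2) = c.1 := by
  intro c hc
  have hb := b1 hm hmn hF c hc
  have hge : c.1 ≤ xf m n F (c.1 + c.2) := by
    have h2 := Finset.le_sup (f := fun c' : ℕ × ℕ => if c'.1 + c'.2 ≤ c.1 + c.2 then c'.1 else c.1 + c.2 - c'.2) hc
    simp only [if_pos (le_refl (c.1 + c.2))] at h2
    exact le_trans h2 (le_max_right _ _)
  have hle : xf m n F (c.1 + c.2) ≤ c.1 := by
    apply max_le (by omega)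
    apply Finset.sup_le
    intro c' hc'
    have hb' := b1 hm hmn hF c' hc'
    have hcomp := chain1 hm hmn hF c' hc' c hc
    rcases hcomp with h | h <;> (split_ifs <;> omega)
  omega

lemma yf_bounds {s : ℕ} (hs3 : 3 ≤ s) (hsmn : s ≤ m + n - 1) :
    2 ≤ yf m n F s ∧ s + 1 - n ≤ yf m n F s ∧ yf m n F s ≤ m ∧ yf m n F s ≤ s - 1 := by
  refine ⟨?_, ?_, le_trans (min_le_left _ _) (min_le_left _ _), le_trans (min_le_left _ _) (min_le_right _ _)⟩
  · apply le_min (by omega)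
    apply Finset.le_inf'
    intro c hc
    have hb := b2 hm hmn hF c hc
    split_ifs <;> omega
  · apply le_min (by omega)
    apply Finset.le_inf'
    intro c hc
    have hb := b2 hm hmn hF c hc
    split_ifs <;> omega

lemma yf_three : yf m n F 3 = 2 := by
  have h := yf_bounds hm hmn hF (s := 3) (by omega) (by omega)
  have hmem : ((2, 1) : ℕ × ℕ) ∈ S2 m n F := mem_S2.mpr (Or.inl rfl)
  have h2 := Finset.inf'_le (f := fun c : ℕ × ℕ => if 3 ≤ c.1 + c.2 then c.1 else 3 - c.2) hmem
  have h3 : (if (3:ℕ) ≤ ((2,1) : ℕ × ℕ).1 + ((2,1) : ℕ × ℕ).2 then ((2,1) : ℕ × ℕ).1 else 3 - ((2,1) : ℕ × ℕ).2) = 2 := by norm_num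
  rw [h3] at h2
  have h4 : yf m n F 3 ≤ (S2 m n F).inf' (S2_nonempty m n F) (fun c : ℕ × ℕ => if 3 ≤ c.1 + c.2 then c.1 else 3 - c.2) :=
    min_le_right _ _
  omega

lemma yf_last : yf m n F (m + n - 1) = m := by
  have h := yf_bounds hm hmn hF (s := m + n - 1) (by omega) (by omega)
  have hge : m ≤ yf m n F (m + n - 1) := by
    apply le_min (by omega)
    apply Finset.le_inf'
    intro c hc
    have hb := b2 hm hmn hF c hc
    split_ifs <;> omega
  omega

lemma yf_step {s : ℕ} (hs3 : 3 ≤ s) :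
    yf m n F s ≤ yf m n F (s + 1) ∧ yf m n F (s + 1) ≤ yf m n F s + 1 := by
  constructor
  · apply le_min
    · have h1 : yf m n F s ≤ min m (s - 1) := min_le_left _ _
      omega
    · apply Finset.le_inf'
      intro c hc
      have hb := b2 hm hmn hF c hc
      have h1 : yf m n F s ≤ (if s ≤ c.1 + c.2 then c.1 else s - c.2) :=
        le_trans (min_le_right _ _) (Finset.inf'_le _ hc)
      split_ifs at h1 ⊢ <;> omega
  · obtain ⟨c, hcS, hceq⟩ := Finset.exists_mem_eq_inf' (S2_nonempty m n F)
      (fun c : ℕ × ℕ => if s ≤ c.1 + c.2 then c.1 else s - c.2)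
    have hb := b2 hm hmn hF c hcS
    have e1 : yf m n F (s + 1) ≤ min m (s + 1 - 1) := min_le_left _ _
    have e3 : yf m n F (s + 1) ≤ (if s + 1 ≤ c.1 + c.2 then c.1 else s + 1 - c.2) :=
      le_trans (min_le_right _ _) (Finset.inf'_le _ hcS)
    have e5 : yf m n F s = min (min m (s - 1)) (if s ≤ c.1 + c.2 then c.1 else s - c.2) := by
      rw [yf, hceq]
    split_ifs at e3 e5 <;> omega

lemma yf_mem : ∀ c ∈ S2 m n F, yf m n F (c.1 + c.2) = c.1 := by
  intro c hc
  have hb := b2 hm hmn hF c hc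
  have hle : yf m n F (c.1 + c.2) ≤ c.1 := by
    have h2 := Finset.inf'_le (f := fun c' : ℕ × ℕ => if c.1 + c.2 ≤ c'.1 + c'.2 then c'.1 else c.1 + c.2 - c'.2) hc
    simp only [if_pos (le_refl (c.1 + c.2))] at h2
    exact le_trans (min_le_right _ _) h2
  have hge : c.1 ≤ yf m n F (c.1 + c.2) := by
    apply le_min (by omega)
    apply Finset.le_inf'
    intro c' hc'
    have hb' := b2 hm hmn hF c' hc'
    have hcomp := chain2 hm hmn hF c' hc' c hc
    rcases hcomp with h | h <;> (split_ifs <;> omega)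
  omega

lemma xf_lt_yf {s : ℕ} (hs3 : 3 ≤ s) (hsmn : s ≤ m + n - 1) : xf m n F s < yf m n F s := by
  have hy := yf_bounds hm hmn hF hs3 hsmn
  have hsup : (S1 m n F).sup (fun c : ℕ × ℕ => if c.1 + c.2 ≤ s then c.1 else s - c.2) < yf m n F s := by
    rw [Finset.sup_lt_iff (by rw [Nat.bot_eq_zero]; omega : (⊥ : ℕ) < yf m n F s)]
    intro c hc
    have hb := b1 hm hmn hF c hc
    -- g1 c s < each part of yf
    have hm' : (if c.1 + c.2 ≤ s then c.1 else s - c.2) < m ∧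
        (if c.1 + c.2 ≤ s then c.1 else s - c.2) < s - 1 := by
      have hcm : c.1 = m → c.2 = n := b1b hm hmn hF c hc
      have hc1 : c.2 = 1 → c.1 = 1 := b1a hm hmn hF c hc
      by_cases h1 : c.1 = m
      · have := hcm h1
        split_ifs <;> omega
      · by_cases h2 : c.2 = 1
        · have := hc1 h2
          split_ifs <;> omega
        · split_ifs <;> omega
    have hinf : (if c.1 + c.2 ≤ s then c.1 else s - c.2) <
        (S2 m n F).inf' (S2_nonempty m n F) (fun c' : ℕ × ℕ => if s ≤ c'.1 + c'.2 then c'.1 else s - c'.2) := by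
      rw [Finset.lt_inf'_iff]
      intro c' hc'
      have hb' := b2 hm hmn hF c' hc'
      have hsep := sep hm hmn hF c hc c' hc'
      rcases Nat.le_total (c.1 + c.2) (c'.1 + c'.2) with hor | hor
      · have h1 := hsep.1 hor
        split_ifs <;> omega
      · have h2 := hsep.2 hor
        split_ifs <;> omega
    have : yf m n F s = min (min m (s-1)) ((S2 m n F).inf' (S2_nonempty m n F)
      (fun c' : ℕ × ℕ => if s ≤ c'.1 + c'.2 then c'.1 else s - c'.2)) := rfl
    omega
  have h1 : max 1 (s - n) < yf m n F s := by omega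
  rw [xf]
  omega

end Main


lemma isPath_of_fun {k : ℕ} (hk : 0 < k) (f : ℕ → ℕ × ℕ) {a b c d : ℕ}
    (h0 : f 0 = (a, b)) (hl : f (k - 1) = (c, d))
    (hstep : ∀ i, i + 1 < k → IsStep (f i) (f (i + 1))) :
    IsPath a b c d ((List.range k).map f) := by
  have hne : (List.range k).map f ≠ [] := by
    apply List.ne_nil_of_length_pos; simp; omega
  refine ⟨hne, ?_, ?_, ?_⟩
  · obtain ⟨t, rfl⟩ : ∃ t, k = t + 1 := ⟨k - 1, by omega⟩
    rw [List.range_succ_eq_map]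
    simpa using h0
  · rw [List.getLast?_eq_getLast_of_ne_nil hne, List.getLast_eq_getElem]
    simp only [List.length_map, List.length_range, List.get_eq_getElem, List.getElem_map,
      List.getElem_range]
    rw [hl]
  · refine List.isChain_iff_getElem.mpr ?_
    intro i hi
    simp only [List.length_map, List.length_range] at hi
    simp only [List.get_eq_getElem, List.getElem_map, List.getElem_range]
    exact hstep i (by omega)

section Constr

variable {m n : ℕ} {F : Finset (ℕ × ℕ)} (hm : 3 ≤ m) (hmn : m ≤ n) (hF : IsFace3 m n F)

include hm hmn hF

lemma exists_paths : ∃ P Q : List (ℕ × ℕ), IsPath 1 1 m n P ∧ IsPath 2 1 m (n - 1) Q ∧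
    (∀ v ∈ P, v ∉ Q) ∧ F ⊆ P.toFinset ∪ Q.toFinset := by
  refine ⟨(List.range (m + n - 1)).map (fun i => (xf m n F (i + 2), (i + 2) - xf m n F (i + 2))),
    (List.range (m + n - 3)).map (fun i => (yf m n F (i + 3), (i + 3) - yf m n F (i + 3))),
    ?_, ?_, ?_, ?_⟩
  · apply isPath_of_fun (by omega)
    · show (xf m n F (0 + 2), (0 + 2) - xf m n F (0 + 2)) = (1, 1)
      rw [show (0 + 2 : ℕ) = 2 from rfl, xf_two hm hmn hF]
    · show (xf m n F (m + n - 1 - 1 + 2), (m + n - 1 - 1 + 2) - xf m n F (m + n - 1 - 1 + 2)) = (m, n)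
      rw [show m + n - 1 - 1 + 2 = m + n from by omega, xf_last hm hmn hF]
      exact Prod.ext rfl (by omega)
    · intro i hi
      have hstep := xf_step hm hmn hF (s := i + 2) (by omega) (by omega)
      have hb1 := xf_bounds hm hmn hF (s := i + 2) (by omega) (by omega)
      have hb2 := xf_bounds hm hmn hF (s := i + 2 + 1) (by omega) (by omega)
      show IsStep (xf m n F (i + 2), (i + 2) - xf m n F (i + 2))
        (xf m n F (i + 1 + 2), (i + 1 + 2) - xf m n F (i + 1 + 2))
      rw [show i + 1 + 2 = i + 2 + 1 from by omega]
      rcases (show xf m n F (i + 2 + 1) = xf m n F (i + 2) + 1 ∨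
          xf m n F (i + 2 + 1) = xf m n F (i + 2) from by omega) with h | h
      · left; simp only [Prod.mk.injEq]; constructor <;> omega
      · right; simp only [Prod.mk.injEq]; constructor <;> omega
  · apply isPath_of_fun (by omega)
    · show (yf m n F (0 + 3), (0 + 3) - yf m n F (0 + 3)) = (2, 1)
      rw [show (0 + 3 : ℕ) = 3 from rfl, yf_three hm hmn hF]
    · show (yf m n F (m + n - 3 - 1 + 3), (m + n - 3 - 1 + 3) - yf m n F (m + n - 3 - 1 + 3)) = (m, n - 1)
      rw [show m + n - 3 - 1 + 3 = m + n - 1 from by omega, yf_last hm hmn hF]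
      exact Prod.ext rfl (by omega)
    · intro i hi
      have hstep := yf_step hm hmn hF (s := i + 3) (by omega)
      have hb1 := yf_bounds hm hmn hF (s := i + 3) (by omega) (by omega)
      have hb2 := yf_bounds hm hmn hF (s := i + 3 + 1) (by omega) (by omega)
      show IsStep (yf m n F (i + 3), (i + 3) - yf m n F (i + 3))
        (yf m n F (i + 1 + 3), (i + 1 + 3) - yf m n F (i + 1 + 3))
      rw [show i + 1 + 3 = i + 3 + 1 from by omega]
      rcases (show yf m n F (i + 3 + 1) = yf m n F (i + 3) + 1 ∨
          yf m n F (i + 3 + 1) = yf m n F (i + 3) from by omega) with h | h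
      · left; simp only [Prod.mk.injEq]; constructor <;> omega
      · right; simp only [Prod.mk.injEq]; constructor <;> omega
  · intro v hvP hvQ
    rw [List.mem_map] at hvP hvQ
    obtain ⟨i, hi, rfl⟩ := hvP
    obtain ⟨j, hj, hj2⟩ := hvQ
    rw [List.mem_range] at hi hj
    have hbx := xf_bounds hm hmn hF (s := i + 2) (by omega) (by omega)
    have hby := yf_bounds hm hmn hF (s := j + 3) (by omega) (by omega)
    rw [Prod.ext_iff] at hj2
    obtain ⟨e1, e2⟩ := hj2
    simp only at e1 e2
    have hsum : j + 3 = i + 2 := by omega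
    rw [hsum] at e1
    have hlt := xf_lt_yf hm hmn hF (s := i + 2) (by omega) (by omega)
    omega
  · intro v hv
    have hvb := hF.1 v hv
    by_cases hc : cond2 m n F v
    · have hvS : v ∈ S2 m n F := mem_S2.mpr (Or.inr (Or.inr ⟨hv, hc⟩))
      have hb := b2 hm hmn hF v hvS
      have hy := yf_mem hm hmn hF v hvS
      apply Finset.mem_union_right
      rw [List.mem_toFinset, List.mem_map]
      refine ⟨v.1 + v.2 - 3, List.mem_range.mpr (by omega), ?_⟩
      show (yf m n F (v.1 + v.2 - 3 + 3), (v.1 + v.2 - 3 + 3) - yf m n F (v.1 + v.2 - 3 + 3)) = v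
      rw [show v.1 + v.2 - 3 + 3 = v.1 + v.2 from by omega, hy]
      exact Prod.ext rfl (by omega)
    · have hvS : v ∈ S1 m n F := mem_S1.mpr (Or.inr (Or.inr ⟨hv, hc⟩))
      have hb := b1 hm hmn hF v hvS
      have hx := xf_mem hm hmn hF v hvS
      apply Finset.mem_union_left
      rw [List.mem_toFinset, List.mem_map]
      refine ⟨v.1 + v.2 - 2, List.mem_range.mpr (by omega), ?_⟩
      show (xf m n F (v.1 + v.2 - 2 + 2), (v.1 + v.2 - 2 + 2) - xf m n F (v.1 + v.2 - 2 + 2)) = v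
      rw [show v.1 + v.2 - 2 + 2 = v.1 + v.2 from by omega, hx]
      exact Prod.ext rfl (by omega)

end Constr

end Delta3

theorem delta3_facets (m n : ℕ) (hm : 3 ≤ m) (hmn : m ≤ n) :
    (∀ F : Finset (ℕ × ℕ),
        IsFacet3 m n F ↔
          ∃ P Q : List (ℕ × ℕ), IsPath 1 1 m n P ∧ IsPath 2 1 m (n - 1) Q ∧
            (∀ v ∈ P, v ∉ Q) ∧ F = P.toFinset ∪ Q.toFinset) ∧
    (∀ F : Finset (ℕ × ℕ), IsFacet3 m n F → F.card = 2 * m + 2 * n - 4) := by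
  have main : ∀ F : Finset (ℕ × ℕ),
      IsFacet3 m n F ↔
        ∃ P Q : List (ℕ × ℕ), IsPath 1 1 m n P ∧ IsPath 2 1 m (n - 1) Q ∧
          (∀ v ∈ P, v ∉ Q) ∧ F = P.toFinset ∪ Q.toFinset := by
    intro F
    constructor
    · intro hFt
      obtain ⟨P, Q, hP, hQ, hd, hsub⟩ := Delta3.exists_paths hm hmn hFt.1
      exact ⟨P, Q, hP, hQ, hd, hFt.2 _ (Delta3.face_of_paths hm hmn hP hQ) hsub⟩
    · rintro ⟨P, Q, hP, hQ, hd, rfl⟩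
      exact Delta3.facet_of_paths hm hmn hP hQ hd
  refine ⟨main, fun F hFt => ?_⟩
  obtain ⟨P, Q, hP, hQ, hd, hEq⟩ := (main F).mp hFt
  rw [hEq]
  exact Delta3.card_of_paths hm hmn hP hQ hd
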